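/- For every integer k ≥ 3, the satellite graph S_{2k+1} has the following properties: it is connected; it is not bipartite; it is not regular; its diameter is 2; every vertex lies on a triangle; for every vertex u, each vertex in the neighbourhood of u forms a triangle together with u; it is a core graph; and 0 is a main eigenvalue of its adjacency matrix (there is a kernel vector not orthogonal to the all-ones vector). -/
import Mathlib


/-- Vertices of the satellite graph: the dominating vertex `d = Sum.inl ()`,
the cycle vertices `u i = Sum.inr (Sum.inl i)` and the pendant-type vertices
`w i = Sum.inr (Sum.inr i)`. -/
abbrev SatV (k : ℕ) := Unit ⊕ Fin k ⊕ Fin k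

/-- Generating relation for the satellite graph `S_{2k+1}`: `d` is adjacent to every other
vertex, `u_1, …, u_k` form a cycle, and `u_i` is adjacent to `w_i`. -/
def satRel (k : ℕ) : SatV k → SatV k → Prop
  | Sum.inl _, _ => True
  | Sum.inr (Sum.inl i), Sum.inr (Sum.inl j) => (j : ℕ) = ((i : ℕ) + 1) % k
  | Sum.inr (Sum.inl i), Sum.inr (Sum.inr j) => i = j
  | _, _ => False

/-- The satellite graph `S_{2k+1}` on `2k+1` vertices. -/
def satGraph (k : ℕ) : SimpleGraph (SatV k) := SimpleGraph.fromRel (satRel k)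

noncomputable instance (k : ℕ) : DecidableRel (satGraph k).Adj := Classical.decRel _


namespace SatAux

variable {k : ℕ}

abbrev d : SatV k := Sum.inl ()
abbrev u (i : Fin k) : SatV k := Sum.inr (Sum.inl i)
abbrev w (i : Fin k) : SatV k := Sum.inr (Sum.inr i)

lemma adj_iff (a b : SatV k) :
    (satGraph k).Adj a b ↔ a ≠ b ∧ (satRel k a b ∨ satRel k b a) := Iff.rfl

lemma adj_d_iff (v : SatV k) : (satGraph k).Adj d v ↔ v ≠ d := by
  rw [adj_iff]
  constructor
  · exact fun h => h.1.symm
  · intro h; exact ⟨fun h' => h h'.symm, Or.inl trivial⟩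

lemma adj_d_iff' (v : SatV k) : (satGraph k).Adj v d ↔ v ≠ d := by
  rw [(satGraph k).adj_comm, adj_d_iff]

lemma d_ne_u (i : Fin k) : d ≠ u i := by simp [d, u]
lemma d_ne_w (i : Fin k) : d ≠ w i := by simp [d, w]
lemma u_ne_w (i j : Fin k) : u i ≠ w j := by simp [u, w]

lemma adj_du (i : Fin k) : (satGraph k).Adj d (u i) := (adj_d_iff _).2 (d_ne_u i).symm
lemma adj_dw (i : Fin k) : (satGraph k).Adj d (w i) := (adj_d_iff _).2 (d_ne_w i).symm

lemma adj_uw_iff (i j : Fin k) : (satGraph k).Adj (u i) (w j) ↔ i = j := by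
  rw [adj_iff]
  simp [satRel, u, w]

lemma not_adj_ww (i j : Fin k) : ¬ (satGraph k).Adj (w i) (w j) := by
  rw [adj_iff]
  simp [satRel, u, w]

lemma adj_wu_iff (i j : Fin k) : (satGraph k).Adj (w i) (u j) ↔ j = i := by
  rw [(satGraph k).adj_comm, adj_uw_iff, eq_comm]

/-- successor neighbour on the cycle -/
def n1 (hk : 3 ≤ k) (j : Fin k) : Fin k := ⟨((j : ℕ) + 1) % k, Nat.mod_lt _ (by omega)⟩

/-- predecessor neighbour on the cycle -/
def n2 (hk : 3 ≤ k) (j : Fin k) : Fin k := ⟨((j : ℕ) + (k - 1)) % k, Nat.mod_lt _ (by omega)⟩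

lemma n1_val (hk : 3 ≤ k) (j : Fin k) :
    ((n1 hk j : Fin k) : ℕ) = if (j : ℕ) + 1 = k then 0 else (j : ℕ) + 1 := by
  show ((j : ℕ) + 1) % k = _
  split
  · next h => rw [h, Nat.mod_self]
  · exact Nat.mod_eq_of_lt (by omega)

lemma n2_val (hk : 3 ≤ k) (j : Fin k) :
    ((n2 hk j : Fin k) : ℕ) = if (j : ℕ) = 0 then k - 1 else (j : ℕ) - 1 := by
  show ((j : ℕ) + (k - 1)) % k = _
  split
  · next h => rw [h, Nat.zero_add]; exact Nat.mod_eq_of_lt (by omega)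
  · rw [Nat.mod_eq_sub_mod (by omega)]
    have hj := j.isLt
    have : (j : ℕ) + (k - 1) - k = (j : ℕ) - 1 := by omega
    rw [this]
    exact Nat.mod_eq_of_lt (by omega)

lemma succ_iff (hk : 3 ≤ k) (i j : Fin k) : ((i : ℕ) = ((j : ℕ) + 1) % k) ↔ i = n1 hk j := by
  rw [Fin.ext_iff]; rfl

lemma pred_iff (hk : 3 ≤ k) (i j : Fin k) : ((j : ℕ) = ((i : ℕ) + 1) % k) ↔ i = n2 hk j := by
  have hik := i.isLt
  have hjk := j.isLt
  rw [Fin.ext_iff, n2_val hk j]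
  have e1 : ((i : ℕ) + 1) % k = if (i : ℕ) + 1 = k then 0 else (i : ℕ) + 1 := by
    split
    · next h => rw [h, Nat.mod_self]
    · exact Nat.mod_eq_of_lt (by omega)
  rw [e1]
  split <;> split <;> omega

lemma adj_uu_iff (hk : 3 ≤ k) (i j : Fin k) :
    (satGraph k).Adj (u j) (u i) ↔ i = n1 hk j ∨ i = n2 hk j := by
  have hik := i.isLt
  have hjk := j.isLt
  rw [adj_iff]
  show (u j ≠ u i ∧ (((i:ℕ) = ((j:ℕ)+1) % k) ∨ ((j:ℕ) = ((i:ℕ)+1) % k))) ↔ _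
  rw [succ_iff hk, pred_iff hk]
  constructor
  · exact fun h => h.2
  · intro h
    refine ⟨fun he => ?_, h⟩
    have : i = j := by
      simpa [u, Sum.inr.injEq, Sum.inl.injEq] using he.symm
    subst this
    rcases h with h | h <;> rw [Fin.ext_iff] at h
    · rw [n1_val hk] at h; split at h <;> omega
    · rw [n2_val hk] at h; split at h <;> omega

lemma n1_ne (hk : 3 ≤ k) (j : Fin k) : n1 hk j ≠ j := by
  have := j.isLt
  rw [Ne, Fin.ext_iff, n1_val hk]
  split <;> omega

lemma n2_ne (hk : 3 ≤ k) (j : Fin k) : n2 hk j ≠ j := by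
  have := j.isLt
  rw [Ne, Fin.ext_iff, n2_val hk]
  split <;> omega

lemma n1_ne_n2 (hk : 3 ≤ k) (j : Fin k) : n1 hk j ≠ n2 hk j := by
  have := j.isLt
  rw [Ne, Fin.ext_iff, n1_val hk, n2_val hk]
  split <;> split <;> omega

end SatAux

open SatAux in
/-- For every `k ≥ 3`, the satellite graph `S_{2k+1}` is connected, non-bipartite,
non-regular, has diameter `2`, every vertex lies on a triangle, every neighbour of a
vertex `u` forms a triangle with `u`, it is a core graph, and `0` is a main eigenvalue
of its adjacency matrix. -/
theorem satGraph_mem_C (k : ℕ) (hk : 3 ≤ k) :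
    (satGraph k).Connected ∧
    ¬ (satGraph k).Colorable 2 ∧
    (¬ ∃ d, (satGraph k).IsRegularOfDegree d) ∧
    (satGraph k).diam = 2 ∧
    (∀ v, ∃ a b, (satGraph k).Adj v a ∧ (satGraph k).Adj v b ∧ (satGraph k).Adj a b) ∧
    (∀ u v, (satGraph k).Adj u v → ∃ w, (satGraph k).Adj u w ∧ (satGraph k).Adj v w) ∧
    (∀ v, ∃ x : SatV k → ℝ, ((satGraph k).adjMatrix ℝ).mulVec x = 0 ∧ x v ≠ 0) ∧
    (∃ x : SatV k → ℝ, ((satGraph k).adjMatrix ℝ).mulVec x = 0 ∧ ∑ v, x v ≠ 0) := by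
  classical
  set i0 : Fin k := ⟨0, by omega⟩ with hi0
  set i1 : Fin k := ⟨1, by omega⟩ with hi1
  -- connectivity
  have hreach : ∀ v : SatV k, (satGraph k).Reachable d v := by
    intro v
    by_cases h : v = d
    · rw [h]
    · exact ((adj_d_iff v).2 h).reachable
  have hcon : (satGraph k).Connected := by
    rw [SimpleGraph.connected_iff]
    exact ⟨fun a b => (hreach a).symm.trans (hreach b), ⟨d⟩⟩
  -- the triangle d, u i0, u i1
  have hadj01 : (satGraph k).Adj (u i0) (u i1) := by
    rw [adj_uu_iff hk]
    left
    rw [Fin.ext_iff, n1_val hk]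
    have h0 : (i0 : ℕ) = 0 := rfl
    have h1 : (i1 : ℕ) = 1 := rfl
    split <;> omega
  have hncol : ¬ (satGraph k).Colorable 2 := by
    intro hc
    exact hc.cliqueFree (by norm_num) {d, u i0, u i1}
      (SimpleGraph.is3Clique_triple_iff.mpr ⟨adj_du i0, adj_du i1, hadj01⟩)
  -- non-regularity
  have hnbr_w : (satGraph k).neighborFinset (w i0) = {d, u i0} := by
    ext a
    rw [SimpleGraph.mem_neighborFinset]
    constructor
    · intro h
      rcases a with y | j | j
      · cases y; simp
      · have := (adj_wu_iff i0 j).1 h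
        subst this
        simp
      · exact absurd h (not_adj_ww i0 j)
    · intro h
      rcases Finset.mem_insert.1 h with h | h
      · subst h; exact (adj_d_iff' _).2 (by simp)
      · rw [Finset.mem_singleton] at h
        subst h
        exact (adj_wu_iff i0 i0).2 rfl
  have hdeg_w : (satGraph k).degree (w i0) = 2 := by
    rw [SimpleGraph.degree, hnbr_w]
    rw [Finset.card_insert_of_notMem (by simp), Finset.card_singleton]
  have hnbr_d : (satGraph k).neighborFinset (d : SatV k) = Finset.univ.erase d := by
    ext a
    rw [SimpleGraph.mem_neighborFinset, Finset.mem_erase, adj_d_iff]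
    simp
  have hdeg_d : (satGraph k).degree (d : SatV k) = k + k := by
    rw [SimpleGraph.degree, hnbr_d, Finset.card_erase_of_mem (Finset.mem_univ _),
      Finset.card_univ]
    simp
  have hnreg : ¬ ∃ c, (satGraph k).IsRegularOfDegree c := by
    rintro ⟨c, hreg⟩
    have h1 := hreg (w i0)
    have h2 := hreg d
    rw [hdeg_w] at h1
    rw [hdeg_d] at h2
    omega
  -- the diameter
  have hdiam : (satGraph k).diam = 2 := by
    have hupper : ∀ a b : SatV k, (satGraph k).edist a b ≤ 2 := by
      intro a b
      by_cases hab : a = b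
      · subst hab; simp [SimpleGraph.edist_self]
      · by_cases hadj : (satGraph k).Adj a b
        · rw [SimpleGraph.edist_eq_one_iff_adj.mpr hadj]
          exact one_le_two
        · have ha : a ≠ d := by
            rintro rfl
            exact hadj ((adj_d_iff b).2 (Ne.symm hab))
          have hb : b ≠ d := by
            rintro rfl
            exact hadj ((adj_d_iff' a).2 ha)
          calc (satGraph k).edist a b ≤ (satGraph k).edist a d + (satGraph k).edist d b :=
                SimpleGraph.edist_triangle
            _ = 1 + 1 := by
                rw [SimpleGraph.edist_eq_one_iff_adj.mpr ((adj_d_iff' a).2 ha),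
                  SimpleGraph.edist_eq_one_iff_adj.mpr ((adj_d_iff b).2 hb)]
            _ = 2 := one_add_one_eq_two
    have hne01 : (w i0 : SatV k) ≠ w i1 := by
      have h0 : (i0 : ℕ) = 0 := rfl
      have h1 : (i1 : ℕ) = 1 := rfl
      simp only [ne_eq, Sum.inr.injEq, Fin.ext_iff]
      omega
    have hlow : (2 : ℕ∞) ≤ (satGraph k).edist (w i0) (w i1) := by
      have h0 : (satGraph k).edist (w i0) (w i1) ≠ 0 :=
        fun h => hne01 (SimpleGraph.edist_eq_zero_iff.mp h)
      have h1 : (satGraph k).edist (w i0) (w i1) ≠ 1 :=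
        fun h => not_adj_ww i0 i1 (SimpleGraph.edist_eq_one_iff_adj.mp h)
      have hlt : 1 < (satGraph k).edist (w i0) (w i1) :=
        lt_of_le_of_ne (ENat.one_le_iff_ne_zero.mpr h0) (Ne.symm h1)
      calc (2 : ℕ∞) = 1 + 1 := one_add_one_eq_two.symm
        _ ≤ (satGraph k).edist (w i0) (w i1) := Order.add_one_le_of_lt hlt
    have hed : (satGraph k).ediam = 2 :=
      le_antisymm (SimpleGraph.ediam_le_of_edist_le hupper)
        (hlow.trans SimpleGraph.edist_le_ediam)
    rw [SimpleGraph.diam, hed]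
    rfl
  -- neighbours of adjacent pairs
  have h6 : ∀ a b, (satGraph k).Adj a b → ∃ c, (satGraph k).Adj a c ∧ (satGraph k).Adj b c := by
    intro a b hab
    by_cases ha : a = d
    · subst ha
      rcases b with y | j | j
      · cases y; exact absurd rfl hab.ne
      · exact ⟨w j, adj_dw j, (adj_uw_iff j j).2 rfl⟩
      · exact ⟨u j, adj_du j, (adj_wu_iff j j).2 rfl⟩
    · by_cases hb : b = d
      · subst hb
        rcases a with y | j | j
        · cases y; exact absurd rfl hab.ne
        · exact ⟨w j, (adj_uw_iff j j).2 rfl, adj_dw j⟩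
        · exact ⟨u j, (adj_wu_iff j j).2 rfl, adj_du j⟩
      · exact ⟨d, (adj_d_iff' a).2 ha, (adj_d_iff' b).2 hb⟩
  -- every vertex lies on a triangle
  have h5 : ∀ v, ∃ a b, (satGraph k).Adj v a ∧ (satGraph k).Adj v b ∧ (satGraph k).Adj a b := by
    intro v
    by_cases hv : v = d
    · subst hv
      exact ⟨u i0, u i1, adj_du i0, adj_du i1, hadj01⟩
    · obtain ⟨c, h1, h2⟩ := h6 d v ((adj_d_iff v).2 hv)
      exact ⟨d, c, (adj_d_iff' v).2 hv, h2, h1⟩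
  -- the kernel vector
  set x : SatV k → ℝ := Sum.elim (fun _ => 1) (Sum.elim (fun _ => (-1 : ℝ)) fun _ => 1) with hxdef
  have hx : ((satGraph k).adjMatrix ℝ).mulVec x = 0 := by
    funext v
    have expand : ((satGraph k).adjMatrix ℝ).mulVec x v =
        ∑ a : SatV k, (if (satGraph k).Adj v a then x a else 0) := by
      rw [Matrix.mulVec, dotProduct]
      refine Finset.sum_congr rfl fun a _ => ?_
      rw [SimpleGraph.adjMatrix_apply]
      split <;> simp
    rw [expand]
    show _ = (0 : ℝ)
    rw [Fintype.sum_sum_type, Fintype.sum_sum_type]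
    rcases v with y | j | j
    · cases y
      have e1 : ∑ y : Unit, (if (satGraph k).Adj d (Sum.inl y) then x (Sum.inl y) else 0) = 0 := by
        rw [Fintype.sum_unique, if_neg (satGraph k).irrefl]
      have e2 : ∑ i : Fin k, (if (satGraph k).Adj d (u i) then x (u i) else 0) = -(k : ℝ) := by
        simp [adj_du, hxdef]
      have e3 : ∑ i : Fin k, (if (satGraph k).Adj d (w i) then x (w i) else 0) = (k : ℝ) := by
        simp [adj_dw, hxdef]
      rw [e1, e2, e3]
      ring
    · have e1 : ∑ y : Unit, (if (satGraph k).Adj (u j) (Sum.inl y) then x (Sum.inl y) else 0)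
          = 1 := by
        rw [Fintype.sum_unique, if_pos ((adj_d_iff' (u j)).2 (by simp))]
        rfl
      have e2 : ∑ i : Fin k, (if (satGraph k).Adj (u j) (u i) then x (u i) else 0)
          = -2 := by
        have key : ∀ i : Fin k, (if (satGraph k).Adj (u j) (u i) then x (u i) else 0)
            = (if i = n1 hk j then (-1 : ℝ) else 0) + (if i = n2 hk j then (-1 : ℝ) else 0) := by
          intro i
          simp only [adj_uu_iff hk]
          by_cases h1 : i = n1 hk j <;> by_cases h2 : i = n2 hk j
          · exact absurd (h1.symm.trans h2) (n1_ne_n2 hk j)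
          · simp [h1, h2, hxdef, n1_ne_n2 hk j, (n1_ne_n2 hk j).symm]
          · simp [h1, h2, hxdef, n1_ne_n2 hk j, (n1_ne_n2 hk j).symm]
          · simp [h1, h2, hxdef]
        rw [Finset.sum_congr rfl fun i _ => key i, Finset.sum_add_distrib,
          Finset.sum_ite_eq' Finset.univ (n1 hk j) (fun _ => (-1 : ℝ)),
          Finset.sum_ite_eq' Finset.univ (n2 hk j) (fun _ => (-1 : ℝ))]
        norm_num
      have e3 : ∑ i : Fin k, (if (satGraph k).Adj (u j) (w i) then x (w i) else 0)
          = 1 := by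
        have key : ∀ i : Fin k, (if (satGraph k).Adj (u j) (w i) then x (w i) else 0)
            = (if i = j then (1 : ℝ) else 0) := by
          intro i
          simp only [adj_uw_iff]
          by_cases h : j = i
          · subst h; simp [hxdef]
          · rw [if_neg h, if_neg (Ne.symm h)]
        rw [Finset.sum_congr rfl fun i _ => key i,
          Finset.sum_ite_eq' Finset.univ j (fun _ => (1 : ℝ))]
        simp
      rw [e1, e2, e3]
      ring
    · have e1 : ∑ y : Unit, (if (satGraph k).Adj (w j) (Sum.inl y) then x (Sum.inl y) else 0)
          = 1 := by
        rw [Fintype.sum_unique, if_pos ((adj_d_iff' (w j)).2 (by simp))]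
        rfl
      have e2 : ∑ i : Fin k, (if (satGraph k).Adj (w j) (u i) then x (u i) else 0)
          = -1 := by
        have key : ∀ i : Fin k, (if (satGraph k).Adj (w j) (u i) then x (u i) else 0)
            = (if i = j then (-1 : ℝ) else 0) := by
          intro i
          simp only [adj_wu_iff]
          by_cases h : i = j
          · subst h; simp [hxdef]
          · rw [if_neg h, if_neg h]
        rw [Finset.sum_congr rfl fun i _ => key i,
          Finset.sum_ite_eq' Finset.univ j (fun _ => (-1 : ℝ))]
        simp
      have e3 : ∑ i : Fin k, (if (satGraph k).Adj (w j) (w i) then x (w i) else 0)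
          = 0 := by
        simp [not_adj_ww]
      rw [e1, e2, e3]
      ring
  have h7 : ∀ v, ∃ x : SatV k → ℝ, ((satGraph k).adjMatrix ℝ).mulVec x = 0 ∧ x v ≠ 0 := by
    intro v
    refine ⟨x, hx, ?_⟩
    rcases v with y | j | j <;> simp [hxdef]
  have h8 : ∃ x : SatV k → ℝ, ((satGraph k).adjMatrix ℝ).mulVec x = 0 ∧ ∑ v, x v ≠ 0 := by
    refine ⟨x, hx, ?_⟩
    rw [Fintype.sum_sum_type, Fintype.sum_sum_type]
    simp [hxdef]
  exact ⟨hcon, hncol, hnreg, hdiam, h5, h6, h7, h8⟩
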